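/- Let G be a group and H a normal subgroup of G such that the quotient group G/H is a Dedekind group (every subgroup of G/H is normal). Then the subgroup topology G^H makes G a topological group. -/

import Mathlib

open Pointwise

/-- The subgroup topology on `G` determined by a collection `F` of subgroups:
generated by all left cosets of members of `F`. -/
def subgroupTopology {G : Type*} [Group G] (F : Set (Subgroup G)) : TopologicalSpace G :=
  TopologicalSpace.generateFrom {s | ∃ (g : G) (K : Subgroup G), K ∈ F ∧ s = g • (K : Set G)}

/-- A collection of subgroups is a neighbourhood family if any two members
contain a common member. -/
def IsNeighbourhoodFamily {G : Type*} [Group G] (F : Set (Subgroup G)) : Prop :=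
  ∀ K₁ ∈ F, ∀ K₂ ∈ F, ∃ S ∈ F, S ≤ K₁ ⊓ K₂

/-- The subgroup topology `G^H` determined by a subgroup `H`: generated by all
left cosets of subgroups containing `H`. -/
def subgroupTopologyOf {G : Type*} [Group G] (H : Subgroup G) : TopologicalSpace G :=
  subgroupTopology {K | H ≤ K}

theorem subgroupTopologyOf_topologicalGroup_of_dedekind {G : Type*} [Group G]
    (H : Subgroup G) (hH : H.Normal)
    (hDed : ∀ K : Subgroup (G ⧸ H), K.Normal) :
    @IsTopologicalGroup G (subgroupTopologyOf H) _ := by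
  haveI := hH
  have hnorm : ∀ K : Subgroup G, H ≤ K → K.Normal := by
    intro K hK
    have h1 : Subgroup.comap (QuotientGroup.mk' H) (Subgroup.map (QuotientGroup.mk' H) K) = K := by
      rw [Subgroup.comap_map_eq, QuotientGroup.ker_mk']
      exact sup_eq_left.mpr hK
    rw [← h1]
    exact Subgroup.Normal.comap (hDed _) _
  letI : TopologicalSpace G := subgroupTopologyOf H
  have hopen : ∀ (g : G) (K : Subgroup G), H ≤ K → IsOpen (g • (K : Set G)) := fun g K hK =>
    TopologicalSpace.GenerateOpen.basic _ ⟨g, K, hK, rfl⟩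
  refine { continuous_mul := ?_, continuous_inv := ?_ }
  · -- continuous mul
    apply continuous_generateFrom_iff.mpr
    rintro s ⟨g, K, hK, rfl⟩
    haveI := hnorm K hK
    rw [isOpen_iff_forall_mem_open]
    rintro ⟨a, b⟩ hab
    refine ⟨(a • (K : Set G)) ×ˢ (b • (K : Set G)), ?_, (hopen a K hK).prod (hopen b K hK), ?_, ?_⟩
    · rintro ⟨x, y⟩ ⟨⟨k₁, hk₁, rfl⟩, ⟨k₂, hk₂, rfl⟩⟩
      obtain ⟨k₀, hk₀, hab'⟩ := hab
      simp only [smul_eq_mul, Set.mem_preimage, Set.mem_smul_set] at *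
      refine ⟨k₀ * (b⁻¹ * k₁ * b) * k₂, ?_, ?_⟩
      · exact mul_mem (mul_mem hk₀ (Subgroup.Normal.conj_mem' ‹K.Normal› k₁ hk₁ b)) hk₂
      · rw [show a * k₁ * (b * k₂) = (a * b) * (b⁻¹ * k₁ * b) * k₂ by group, ← hab']; group
    · exact ⟨1, one_mem K, by simp⟩
    · exact ⟨1, one_mem K, by simp⟩
  · -- continuous inv
    apply continuous_generateFrom_iff.mpr
    rintro s ⟨g, K, hK, rfl⟩
    haveI := hnorm K hK
    have : (Inv.inv ⁻¹' (g • (K : Set G)) : Set G) = g⁻¹ • (K : Set G) := by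
      ext x
      simp only [Set.mem_preimage, Set.mem_smul_set, smul_eq_mul]
      constructor
      · rintro ⟨k, hk, hx⟩
        refine ⟨g * k⁻¹ * g⁻¹, Subgroup.Normal.conj_mem ‹K.Normal› _ (inv_mem hk) g, ?_⟩
        have : x = k⁻¹ * g⁻¹ := by
          rw [← inv_inv x, ← hx]; group
        rw [this]; group
      · rintro ⟨k, hk, hx⟩
        refine ⟨g⁻¹ * k⁻¹ * g, Subgroup.Normal.conj_mem' ‹K.Normal› _ (inv_mem hk) g, ?_⟩
        rw [← hx]; group
    rw [this]
    exact hopen _ K hK
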